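/- Let V be a 3-dimensional vector space over a field k of characteristic ≠ 2, ω a nonzero alternating trilinear form, a, b ∈ V, l(v) = ω(a,b,v), g a symmetric bilinear form with Δ = g(a,a)g(b,b) − g(a,b)², T the operator Tv = g(b,v)a − g(a,v)b, q ∈ k, and T' = T + ((q+1)/2)·Id. Then the identity g(x,T'u)l(v) − g(x,T'v)l(u) + ω(x,T'u,T'v) = q·ω(x,u,v) holds for all x, u, v ∈ V if and only if (q+1)²/4 + Δ = q, equivalently (q−1)² = −4Δ. -/

import Mathlib

open Module

set_option maxHeartbeats 4000000 in
theorem stmt10 (k V : Type*) [Field k] [AddCommGroup V] [Module k V]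
    [FiniteDimensional k V] (hdim : finrank k V = 3) (hchar : (2 : k) ≠ 0)
    (ω : V [⋀^Fin 3]→ₗ[k] k) (hω : ω ≠ 0)
    (a b : V) (l : Module.Dual k V) (hl : ∀ v, l v = ω ![a, b, v])
    (g : LinearMap.BilinForm k V) (hg : g.IsSymm)
    (Δ : k) (hΔ : Δ = g a a * g b b - g a b ^ 2)
    (T : V →ₗ[k] V) (hT : ∀ v, T v = g b v • a - g a v • b)
    (q : k) (T' : V →ₗ[k] V) (hT' : ∀ v, T' v = T v + ((q + 1) / 2) • v) :
    ((∀ x u v : V,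
        g x (T' u) * l v - g x (T' v) * l u + ω ![x, T' u, T' v]
          = q * ω ![x, u, v])
      ↔ (q + 1) ^ 2 / 4 + Δ = q)
    ∧ ((q + 1) ^ 2 / 4 + Δ = q ↔ (q - 1) ^ 2 = -(4 * Δ)) := by
  have e : Basis (Fin 3) k V := Module.finBasisOfFinrankEq k V hdim
  -- expansion of ω in coordinates
  have hω' : ∀ x u v : V, ω ![x, u, v] = ω ⇑e *
      (e.repr x 0 * e.repr u 1 * e.repr v 2 - e.repr x 0 * e.repr v 1 * e.repr u 2
       - e.repr u 0 * e.repr x 1 * e.repr v 2 + e.repr u 0 * e.repr v 1 * e.repr x 2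
       + e.repr v 0 * e.repr x 1 * e.repr u 2 - e.repr v 0 * e.repr u 1 * e.repr x 2) := by
    intro x u v
    conv_lhs => rw [ω.eq_smul_basis_det e]
    rw [AlternatingMap.smul_apply, smul_eq_mul, Basis.det_apply, Matrix.det_fin_three]
    simp only [Basis.toMatrix_apply, Matrix.cons_val_zero, Matrix.cons_val_one,
      Matrix.head_cons, Matrix.cons_val_two, Matrix.tail_cons]
  -- expansion of g in coordinates
  have hg' : ∀ x y : V, g x y = ∑ i, e.repr x i * ∑ j, e.repr y j * g (e i) (e j) := by
    intro x y
    conv_lhs => rw [← e.sum_repr x, ← e.sum_repr y]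
    simp only [map_sum, map_smul, LinearMap.sum_apply, LinearMap.smul_apply, smul_eq_mul,
      Finset.mul_sum]
    rw [Finset.sum_comm]
    exact Finset.sum_congr rfl fun i _ => Finset.sum_congr rfl fun j _ => by ring
  -- coordinates of T'
  have hr : ∀ (z : V) (i : Fin 3), e.repr (T' z) i
      = g b z * e.repr a i - g a z * e.repr b i + ((q + 1) / 2) * e.repr z i := by
    intro z i
    rw [hT' z, hT z]
    simp [sub_smul, add_smul, mul_smul]
  have hsym : ∀ i j : Fin 3, g (e j) (e i) = g (e i) (e j) := fun i j => (hg.eq (e i) (e j)).symm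
  -- the key identity
  have key : ∀ x u v : V,
      g x (T' u) * ω ![a, b, v] - g x (T' v) * ω ![a, b, u] + ω ![x, T' u, T' v]
        = (((q + 1) / 2) ^ 2 + Δ) * ω ![x, u, v] := by
    intro x u v
    rw [hω' a b v, hω' a b u, hω' x (T' u) (T' v), hω' x u v,
      hg' x (T' u), hg' x (T' v), hΔ, hg' a a, hg' b b, hg' a b]
    simp only [hr]
    rw [hg' b u, hg' a u, hg' b v, hg' a v]
    simp only [Fin.sum_univ_three]
    rw [hsym 0 1, hsym 0 2, hsym 1 2]
    ring
  have hc : (((q + 1) / 2) ^ 2 : k) = (q + 1) ^ 2 / 4 := by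
    rw [div_pow]; norm_num
  have h4 : (4 : k) ≠ 0 := by
    have := mul_ne_zero hchar hchar
    norm_num at this
    exact_mod_cast this
  constructor
  · constructor
    · intro h
      have h0 : ω ⇑e ≠ 0 := fun h0 => hω ((AlternatingMap.map_basis_eq_zero_iff e ω).mp h0)
      have hbe : (⇑e : Fin 3 → V) = ![e 0, e 1, e 2] := by
        funext i; fin_cases i <;> simp
      have h1 := h (e 0) (e 1) (e 2)
      simp only [hl] at h1
      have h2 := key (e 0) (e 1) (e 2)
      rw [h1] at h2
      have h3 : ω ![e 0, e 1, e 2] ≠ 0 := by rwa [← hbe]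
      have h4 : q = ((q + 1) / 2) ^ 2 + Δ := mul_right_cancel₀ h3 h2
      rw [hc] at h4
      exact h4.symm
    · intro h x u v
      simp only [hl]
      rw [key x u v, hc, h]
  · constructor
    · intro h
      rw [div_add' _ _ _ h4, div_eq_iff h4] at h
      linear_combination h
    · intro h
      field_simp
      linear_combination h
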